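/- Let d ≥ 1, w > 0, let A ∈ ℝ^{d×d} be a symmetric matrix, and let ν ∈ ℝ^d be a unit vector. Then ∫_{ℝ^d} (Az)·∇G_w(z) · (ν·z)₊ dz = −(√w/√π)·(tr A + ν·Aν), where ∇G_w is the gradient of G_w and (·)₊ denotes the positive part. -/

import Mathlib

open Real MeasureTheory Set Filter
open scoped RealInnerProductSpace

/-- The `d`-dimensional heat kernel `G_t(z) = (4πt)^{-d/2} exp(-|z|²/(4t))`. -/
noncomputable def heatKE (d : ℕ) (t : ℝ) (z : EuclideanSpace ℝ (Fin d)) : ℝ :=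
  (4 * Real.pi * t) ^ (-(d : ℝ) / 2) * Real.exp (-‖z‖ ^ 2 / (4 * t))


lemma tendsto_poly_gauss (b : ℝ) (hb : 0 < b) (n : ℕ) :
    Tendsto (fun x : ℝ => x ^ n * Real.exp (-b * x ^ 2)) atTop (nhds 0) := by
  have h1 : Tendsto (fun x : ℝ => x ^ 2) atTop atTop := tendsto_pow_atTop two_ne_zero
  have h2 := (tendsto_rpow_mul_exp_neg_mul_atTop_nhds_zero ((n : ℝ) / 2) b hb).comp h1
  apply h2.congr'
  filter_upwards [eventually_ge_atTop (0 : ℝ)] with x hx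
  have : (x ^ 2) ^ ((n : ℝ) / 2) = x ^ n := by
    rw [← Real.rpow_natCast x 2, ← Real.rpow_mul hx, ← Real.rpow_natCast x n]
    congr 1
    ring
  simp [Function.comp, this]

lemma integrable_pow_gauss (b : ℝ) (hb : 0 < b) (n : ℕ) :
    Integrable (fun x : ℝ => x ^ n * Real.exp (-b * x ^ 2)) := by
  have := integrable_rpow_mul_exp_neg_mul_sq hb (s := (n : ℝ))
    (by exact_mod_cast neg_one_lt_zero.trans_le (Nat.cast_nonneg n))
  simpa [Real.rpow_natCast] using this

lemma gauss_odd_zero (b : ℝ) (hb : 0 < b) : ∫ x : ℝ, x * Real.exp (-b * x ^ 2) = 0 := by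
  have hint : Integrable (fun x : ℝ => x * Real.exp (-b * x ^ 2)) :=
    integrable_mul_exp_neg_mul_sq hb
  have hsplit := intervalIntegral.integral_Iic_add_Ioi (b := (0:ℝ)) (μ := volume)
    hint.integrableOn hint.integrableOn
  have hneg := integral_comp_neg_Iic (0 : ℝ) (fun x => x * Real.exp (-b * x ^ 2))
  simp only [neg_zero, neg_sq, neg_mul] at hneg
  have : (∫ x in Iic (0:ℝ), -(x * Real.exp (-b * x ^ 2)))
      = ∫ x in Ioi (0:ℝ), x * Real.exp (-b * x ^ 2) := by
    simpa [neg_mul, mul_comm] using hneg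
  rw [integral_neg] at this
  linarith

lemma gauss_Ioi_one (b : ℝ) (hb : 0 < b) :
    ∫ x in Ioi (0:ℝ), x * Real.exp (-b * x ^ 2) = (2 * b)⁻¹ := by
  have hderiv : ∀ x ∈ Ici (0:ℝ),
      HasDerivAt (fun x : ℝ => -(2 * b)⁻¹ * Real.exp (-b * x ^ 2))
        (x * Real.exp (-b * x ^ 2)) x := by
    intro x _
    have h1 : HasDerivAt (fun x : ℝ => -b * x ^ 2) (-b * (2 * x)) x := by
      simpa using ((hasDerivAt_pow 2 x).const_mul (-b))
    have h2 := (h1.exp).const_mul (-(2 * b)⁻¹)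
    refine h2.congr_deriv ?_
    field_simp [hb.ne']
  have htend : Tendsto (fun x : ℝ => -(2 * b)⁻¹ * Real.exp (-b * x ^ 2)) atTop (nhds 0) := by
    have h0 := (tendsto_poly_gauss b hb 0).const_mul (-(2*b)⁻¹)
    simpa [mul_comm] using h0
  have := MeasureTheory.integral_Ioi_of_hasDerivAt_of_tendsto' hderiv
    ((integrable_mul_exp_neg_mul_sq hb).integrableOn) htend
  simpa using this

lemma gauss_Ioi_three (b : ℝ) (hb : 0 < b) :
    ∫ x in Ioi (0:ℝ), x ^ 3 * Real.exp (-b * x ^ 2) = (2 * b ^ 2)⁻¹ := by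
  have hderiv : ∀ x ∈ Ici (0:ℝ),
      HasDerivAt (fun x : ℝ => -(x ^ 2 / (2 * b) + (2 * b ^ 2)⁻¹) * Real.exp (-b * x ^ 2))
        (x ^ 3 * Real.exp (-b * x ^ 2)) x := by
    intro x _
    have h1 : HasDerivAt (fun x : ℝ => -b * x ^ 2) (-b * (2 * x)) x := by
      simpa using ((hasDerivAt_pow 2 x).const_mul (-b))
    have h2 : HasDerivAt (fun x : ℝ => -(x ^ 2 / (2 * b) + (2 * b ^ 2)⁻¹))
        (-(2 * x / (2 * b))) x := by
      have := (((hasDerivAt_pow 2 x).div_const (2*b)).add_const ((2 * b ^ 2)⁻¹)).neg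
      exact this.congr_deriv (by norm_num)
    have h3 := h2.mul h1.exp
    refine h3.congr_deriv ?_
    field_simp [hb.ne']
    ring
  have htend : Tendsto (fun x : ℝ => -(x ^ 2 / (2 * b) + (2 * b ^ 2)⁻¹) * Real.exp (-b * x ^ 2))
      atTop (nhds 0) := by
    have h0 := (tendsto_poly_gauss b hb 2).const_mul (-(2*b)⁻¹)
    have h1 := (tendsto_poly_gauss b hb 0).const_mul (-(2*b^2)⁻¹)
    have h2 := h0.add h1
    simp only [mul_zero, add_zero, pow_zero, one_mul] at h2
    apply h2.congr
    intro x
    field_simp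
    ring
  have := MeasureTheory.integral_Ioi_of_hasDerivAt_of_tendsto' hderiv
    ((integrable_pow_gauss b hb 3).integrableOn) htend
  rw [this]
  norm_num

lemma gauss_sq (b : ℝ) (hb : 0 < b) :
    ∫ x : ℝ, x ^ 2 * Real.exp (-b * x ^ 2) = Real.sqrt (π / b) / (2 * b) := by
  have habs : ∫ x : ℝ, x ^ 2 * Real.exp (-b * x ^ 2)
      = 2 * ∫ x in Ioi (0:ℝ), x ^ 2 * Real.exp (-b * x ^ 2) := by
    rw [← integral_comp_abs (f := fun x => x ^ 2 * Real.exp (-b * x ^ 2))]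
    simp [sq_abs]
  have hderiv : ∀ x ∈ Ici (0:ℝ),
      HasDerivAt (fun x : ℝ => -(x / (2 * b)) * Real.exp (-b * x ^ 2))
        (x ^ 2 * Real.exp (-b * x ^ 2) - (2 * b)⁻¹ * Real.exp (-b * x ^ 2)) x := by
    intro x _
    have h1 : HasDerivAt (fun x : ℝ => -b * x ^ 2) (-b * (2 * x)) x := by
      simpa using ((hasDerivAt_pow 2 x).const_mul (-b))
    have h2 : HasDerivAt (fun x : ℝ => -(x / (2 * b))) (-(2*b)⁻¹) x := by
      simpa [div_eq_mul_inv, Pi.neg_def] using ((hasDerivAt_id x).div_const (2*b)).neg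
    have h3 := h2.mul h1.exp
    refine h3.congr_deriv ?_
    field_simp [hb.ne']
    ring
  have hint : IntegrableOn
      (fun x : ℝ => x ^ 2 * Real.exp (-b * x ^ 2) - (2 * b)⁻¹ * Real.exp (-b * x ^ 2)) (Ioi 0) :=
    ((integrable_pow_gauss b hb 2).sub
      ((integrable_exp_neg_mul_sq hb).const_mul (2*b)⁻¹)).integrableOn
  have htend : Tendsto (fun x : ℝ => -(x / (2 * b)) * Real.exp (-b * x ^ 2)) atTop (nhds 0) := by
    have h0 := (tendsto_poly_gauss b hb 1).const_mul (-(2*b)⁻¹)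
    simp only [pow_one, mul_zero] at h0
    apply h0.congr
    intro x
    ring
  have hzero := MeasureTheory.integral_Ioi_of_hasDerivAt_of_tendsto' hderiv hint htend
  have hs := MeasureTheory.integral_sub ((integrable_pow_gauss b hb 2).integrableOn (s := Ioi (0:ℝ)))
    (((integrable_exp_neg_mul_sq hb).const_mul (2*b)⁻¹).integrableOn (s := Ioi (0:ℝ)))
  have h0 : (∫ a in Ioi (0:ℝ), a ^ 2 * Real.exp (-b * a ^ 2))
      - ∫ a in Ioi (0:ℝ), (2*b)⁻¹ * Real.exp (-b * a ^ 2) = 0 := by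
    rw [← hs, hzero]
    norm_num
  have hgi : ∫ x in Ioi (0:ℝ), (2*b)⁻¹ * Real.exp (-b * x ^ 2)
      = (2*b)⁻¹ * (Real.sqrt (π / b) / 2) := by
    rw [MeasureTheory.integral_const_mul, integral_gaussian_Ioi]
  rw [habs]
  have : (∫ x in Ioi (0:ℝ), x ^ 2 * Real.exp (-b * x ^ 2)) = (2*b)⁻¹ * (Real.sqrt (π / b) / 2) := by
    linarith [h0, hgi]
  rw [this]
  ring

noncomputable def gauss1 (w : ℝ) (t : ℝ) : ℝ :=
  (4 * π * w) ^ (-(1:ℝ)/2) * Real.exp (-t ^ 2 / (4 * w))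

lemma gauss1_eq (w : ℝ) : gauss1 w = fun t =>
    (4 * π * w) ^ (-(1:ℝ)/2) * Real.exp (-(4*w)⁻¹ * t ^ 2) := by
  funext t
  unfold gauss1
  congr 1
  congr 1
  ring

lemma sqrt_const_eval (w : ℝ) (hw : 0 < w) :
    (4 * π * w) ^ (-(1:ℝ)/2) = (2 * Real.sqrt π * Real.sqrt w)⁻¹ := by
  have h1 : (0:ℝ) < 4 * π * w := by positivity
  rw [show (-(1:ℝ)/2) = -(1/2) by ring, Real.rpow_neg h1.le,
    ← Real.sqrt_eq_rpow]
  congr 1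
  rw [show 4 * π * w = 4 * (π * w) by ring, Real.sqrt_mul (by norm_num : (0:ℝ) ≤ 4),
    Real.sqrt_mul Real.pi_pos.le, show Real.sqrt 4 = 2 by
      rw [show (4:ℝ) = 2^2 by norm_num, Real.sqrt_sq (by norm_num : (0:ℝ) ≤ 2)]]
  ring

lemma integrable_max_pow_gauss (b : ℝ) (hb : 0 < b) (n : ℕ) :
    Integrable (fun t : ℝ => t ^ n * max t 0 * Real.exp (-b * t ^ 2)) := by
  apply Integrable.mono' (integrable_pow_gauss b hb (n+1)).abs
  · apply Continuous.aestronglyMeasurable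
    exact ((continuous_pow n).mul (continuous_id.max continuous_const)).mul
      ((continuous_const.mul (continuous_pow 2)).rexp)
  · refine Filter.Eventually.of_forall fun t => ?_
    have h : |max t 0| ≤ |t| := by
      rcases le_total t 0 with h | h
      · simp [max_eq_right h, abs_nonneg]
      · rw [max_eq_left h]
    simp only [Real.norm_eq_abs, abs_mul, abs_pow]
    calc |t| ^ n * |max t 0| * |Real.exp (-b * t ^ 2)|
        ≤ |t| ^ n * |t| * |Real.exp (-b * t ^ 2)| := by gcongr
      _ = |t| ^ (n+1) * |Real.exp (-b * t ^ 2)| := by ring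

lemma gauss_max_eval (b : ℝ) (hb : 0 < b) (n : ℕ) :
    ∫ t : ℝ, t ^ n * max t 0 * Real.exp (-b * t ^ 2)
      = ∫ t in Ioi (0:ℝ), t ^ (n+1) * Real.exp (-b * t ^ 2) := by
  have hint := integrable_max_pow_gauss b hb n
  rw [← intervalIntegral.integral_Iic_add_Ioi (b := (0:ℝ)) (μ := volume)
    hint.integrableOn hint.integrableOn]
  have h1 : ∫ t in Iic (0:ℝ), t ^ n * max t 0 * Real.exp (-b * t ^ 2) = 0 := by
    rw [setIntegral_congr_fun measurableSet_Iic
      (g := fun _ => (0:ℝ)) (fun t ht => by simp [max_eq_right (mem_Iic.mp ht)])]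
    simp
  have h2 : ∫ t in Ioi (0:ℝ), t ^ n * max t 0 * Real.exp (-b * t ^ 2)
      = ∫ t in Ioi (0:ℝ), t ^ (n+1) * Real.exp (-b * t ^ 2) := by
    apply setIntegral_congr_fun measurableSet_Ioi
    intro t ht
    simp only []
    rw [max_eq_left (le_of_lt (mem_Ioi.mp ht)), pow_succ]
    ring
  rw [h1, h2, zero_add]

section gauss1vals
variable {w : ℝ}

lemma hb4 (w : ℝ) (hw : 0 < w) : (0:ℝ) < (4*w)⁻¹ := by positivity

lemma sqrt_pib (hw : 0 < w) : Real.sqrt (π / (4*w)⁻¹) = 2 * Real.sqrt π * Real.sqrt w := by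
  have : π / (4*w)⁻¹ = (2 * Real.sqrt π * Real.sqrt w)^2 := by
    rw [mul_pow, mul_pow, Real.sq_sqrt Real.pi_pos.le, Real.sq_sqrt hw.le]
    field_simp
    ring
  rw [this, Real.sqrt_sq (by positivity)]

lemma gauss1_int (hw : 0 < w) : ∫ t : ℝ, gauss1 w t = 1 := by
  rw [gauss1_eq, MeasureTheory.integral_const_mul, integral_gaussian, sqrt_const_eval w hw,
    sqrt_pib hw, inv_mul_cancel₀ (by positivity)]

lemma gauss1_int1 (hw : 0 < w) : ∫ t : ℝ, t * gauss1 w t = 0 := by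
  rw [gauss1_eq]
  have : (fun t : ℝ => t * ((4 * π * w) ^ (-(1:ℝ)/2) * Real.exp (-(4*w)⁻¹ * t ^ 2)))
      = fun t : ℝ => (4 * π * w) ^ (-(1:ℝ)/2) * (t * Real.exp (-(4*w)⁻¹ * t ^ 2)) := by
    funext t; ring
  rw [this, MeasureTheory.integral_const_mul, gauss_odd_zero _ (hb4 w hw), mul_zero]

lemma gauss1_int2 (hw : 0 < w) : ∫ t : ℝ, t ^ 2 * gauss1 w t = 2 * w := by
  rw [gauss1_eq]
  have : (fun t : ℝ => t ^ 2 * ((4 * π * w) ^ (-(1:ℝ)/2) * Real.exp (-(4*w)⁻¹ * t ^ 2)))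
      = fun t : ℝ => (4 * π * w) ^ (-(1:ℝ)/2) * (t ^ 2 * Real.exp (-(4*w)⁻¹ * t ^ 2)) := by
    funext t; ring
  rw [this, MeasureTheory.integral_const_mul, gauss_sq _ (hb4 w hw),
    sqrt_const_eval w hw, sqrt_pib hw]
  rw [inv_eq_one_div]
  field_simp
  ring

lemma gauss1_intmax (hw : 0 < w) :
    ∫ t : ℝ, max t 0 * gauss1 w t = Real.sqrt w / Real.sqrt π := by
  rw [gauss1_eq]
  have : (fun t : ℝ => max t 0 * ((4 * π * w) ^ (-(1:ℝ)/2) * Real.exp (-(4*w)⁻¹ * t ^ 2)))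
      = fun t : ℝ => (4 * π * w) ^ (-(1:ℝ)/2) * (t ^ 0 * max t 0 * Real.exp (-(4*w)⁻¹ * t ^ 2)) := by
    funext t; ring
  rw [this, MeasureTheory.integral_const_mul, gauss_max_eval _ (hb4 w hw) 0, zero_add]
  simp only [pow_one]
  rw [gauss_Ioi_one _ (hb4 w hw), sqrt_const_eval w hw]
  have hsw : Real.sqrt w * Real.sqrt w = w := Real.mul_self_sqrt hw.le
  have h1 : Real.sqrt w ≠ 0 := by positivity
  have h2 : Real.sqrt π ≠ 0 := by positivity
  field_simp
  linear_combination (-4) * hsw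

lemma gauss1_intmax2 (hw : 0 < w) :
    ∫ t : ℝ, t ^ 2 * max t 0 * gauss1 w t = 4 * w * (Real.sqrt w / Real.sqrt π) := by
  rw [gauss1_eq]
  have : (fun t : ℝ => t ^ 2 * max t 0 * ((4 * π * w) ^ (-(1:ℝ)/2) * Real.exp (-(4*w)⁻¹ * t ^ 2)))
      = fun t : ℝ => (4 * π * w) ^ (-(1:ℝ)/2) * (t ^ 2 * max t 0 * Real.exp (-(4*w)⁻¹ * t ^ 2)) := by
    funext t; ring
  rw [this, MeasureTheory.integral_const_mul, gauss_max_eval _ (hb4 w hw) 2,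
    gauss_Ioi_three _ (hb4 w hw), sqrt_const_eval w hw]
  have hsw : Real.sqrt w * Real.sqrt w = w := Real.mul_self_sqrt hw.le
  have h1 : Real.sqrt w ≠ 0 := by positivity
  have h2 : Real.sqrt π ≠ 0 := by positivity
  field_simp
  linear_combination (-4) * hsw

lemma integrable_gauss1_pow (hw : 0 < w) (n : ℕ) :
    Integrable (fun t : ℝ => t ^ n * gauss1 w t) := by
  rw [gauss1_eq]
  have : (fun t : ℝ => t ^ n * ((4 * π * w) ^ (-(1:ℝ)/2) * Real.exp (-(4*w)⁻¹ * t ^ 2)))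
      = fun t : ℝ => (4 * π * w) ^ (-(1:ℝ)/2) * (t ^ n * Real.exp (-(4*w)⁻¹ * t ^ 2)) := by
    funext t; ring
  rw [this]
  exact (integrable_pow_gauss _ (hb4 w hw) n).const_mul _

lemma integrable_gauss1_max_pow (hw : 0 < w) (n : ℕ) :
    Integrable (fun t : ℝ => t ^ n * max t 0 * gauss1 w t) := by
  rw [gauss1_eq]
  have : (fun t : ℝ => t ^ n * max t 0 * ((4 * π * w) ^ (-(1:ℝ)/2) * Real.exp (-(4*w)⁻¹ * t ^ 2)))
      = fun t : ℝ => (4 * π * w) ^ (-(1:ℝ)/2) * (t ^ n * max t 0 * Real.exp (-(4*w)⁻¹ * t ^ 2)) := by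
    funext t; ring
  rw [this]
  exact (integrable_max_pow_gauss _ (hb4 w hw) n).const_mul _

end gauss1vals


lemma gradient_heatKE (d : ℕ) (w : ℝ) (hw : 0 < w) (z : EuclideanSpace ℝ (Fin d)) :
    gradient (heatKE d w) z = (-(2*w)⁻¹ * heatKE d w z) • z := by
  have key : HasGradientAt (heatKE d w) ((-(2*w)⁻¹ * heatKE d w z) • z) z := by
    rw [hasGradientAt_iff_hasFDerivAt]
    have h1 : HasFDerivAt (fun x : EuclideanSpace ℝ (Fin d) => ‖x‖^2)
        (2 • innerSL ℝ z) z := (hasStrictFDerivAt_norm_sq z).hasFDerivAt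
    have h2 : HasFDerivAt (fun x : EuclideanSpace ℝ (Fin d) => -‖x‖^2/(4*w))
        ((-(4*w)⁻¹ : ℝ) • (2 • innerSL ℝ z)) z := by
      have heq : (fun x : EuclideanSpace ℝ (Fin d) => -‖x‖^2/(4*w))
          = (fun x : EuclideanSpace ℝ (Fin d) => (-(4*w)⁻¹) * ‖x‖^2) := by
        funext x; ring
      rw [heq]
      exact h1.const_mul _
    have h3 := h2.exp
    have h4 := h3.const_mul ((4 * Real.pi * w) ^ (-(d : ℝ) / 2))
    have : HasFDerivAt (heatKE d w)
        (((4 * Real.pi * w) ^ (-(d : ℝ) / 2)) •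
          (Real.exp (-‖z‖^2/(4*w)) • ((-(4*w)⁻¹ : ℝ) • (2 • innerSL ℝ z)))) z := by
      exact h4.congr_fderiv (by simp [smul_smul])
    apply this.congr_fderiv
    ext y
    simp only [ContinuousLinearMap.coe_smul', Pi.smul_apply, innerSL_apply_apply,
      InnerProductSpace.toDual_apply_apply, real_inner_smul_left, smul_eq_mul,
      ContinuousLinearMap.smul_apply]
    unfold heatKE
    ring
  exact key.gradient


section core
variable {d : ℕ} {w : ℝ}

noncomputable def phiF (w : ℝ) (i0 i j k : Fin d) : ℝ → ℝ := fun t =>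
  (if k = i then t else 1) * (if k = j then t else 1) *
    (if k = i0 then max t 0 else 1) * gauss1 w t

lemma phiF_integrable (hw : 0 < w) (i0 i j k : Fin d) : Integrable (phiF w i0 i j k) := by
  unfold phiF
  by_cases hi : k = i
  · by_cases hj : k = j
    · by_cases h0 : k = i0
      · simp only [if_pos hi, if_pos hj, if_pos h0]
        exact (integrable_gauss1_max_pow hw 2).congr (ae_of_all _ fun t => by ring)
      · simp only [if_pos hi, if_pos hj, if_neg h0]
        exact (integrable_gauss1_pow hw 2).congr (ae_of_all _ fun t => by ring)
    · by_cases h0 : k = i0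
      · simp only [if_pos hi, if_neg hj, if_pos h0]
        exact (integrable_gauss1_max_pow hw 1).congr (ae_of_all _ fun t => by ring)
      · simp only [if_pos hi, if_neg hj, if_neg h0]
        exact (integrable_gauss1_pow hw 1).congr (ae_of_all _ fun t => by ring)
  · by_cases hj : k = j
    · by_cases h0 : k = i0
      · simp only [if_neg hi, if_pos hj, if_pos h0]
        exact (integrable_gauss1_max_pow hw 1).congr (ae_of_all _ fun t => by ring)
      · simp only [if_neg hi, if_pos hj, if_neg h0]
        exact (integrable_gauss1_pow hw 1).congr (ae_of_all _ fun t => by ring)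
    · by_cases h0 : k = i0
      · simp only [if_neg hi, if_neg hj, if_pos h0]
        exact (integrable_gauss1_max_pow hw 0).congr (ae_of_all _ fun t => by ring)
      · simp only [if_neg hi, if_neg hj, if_neg h0]
        exact (integrable_gauss1_pow hw 0).congr (ae_of_all _ fun t => by ring)

lemma phiF_prod_offdiag (hw : 0 < w) {i0 i j : Fin d} (hij : i ≠ j) :
    ∏ k, ∫ t, phiF w i0 i j k t = 0 := by
  by_cases hii0 : i = i0
  · apply Finset.prod_eq_zero (Finset.mem_univ j)
    have hji : j ≠ i := hij.symm
    have hji0 : j ≠ i0 := by rw [← hii0]; exact hji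
    unfold phiF
    simp only [if_neg hji, if_neg hji0, if_pos rfl, one_mul, mul_one]
    exact gauss1_int1 hw
  · apply Finset.prod_eq_zero (Finset.mem_univ i)
    unfold phiF
    simp only [if_pos rfl, if_neg hij, if_neg hii0, one_mul, mul_one]
    exact gauss1_int1 hw

lemma phiF_prod_diag_ne (hw : 0 < w) {i0 i : Fin d} (h : i ≠ i0) :
    ∏ k, ∫ t, phiF w i0 i i k t
      = 2 * w * (Real.sqrt w / Real.sqrt π) := by
  have hfun : (fun k => ∫ t, phiF w i0 i i k t)
      = fun k => (if k = i then 2*w else 1) * (if k = i0 then Real.sqrt w / Real.sqrt π else 1) := by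
    funext k
    unfold phiF
    by_cases hk : k = i
    · have hk0 : k ≠ i0 := by rw [hk]; exact h
      simp only [if_pos hk, if_neg hk0, mul_one]
      rw [show (fun t : ℝ => t * t * gauss1 w t) = fun t : ℝ => t^2 * gauss1 w t from
        funext fun t => by ring]
      exact gauss1_int2 hw
    · by_cases hk0 : k = i0
      · simp only [if_neg hk, if_pos hk0, one_mul]
        exact gauss1_intmax hw
      · simp only [if_neg hk, if_neg hk0, one_mul]
        exact gauss1_int hw
  rw [hfun, Finset.prod_mul_distrib]
  simp [Finset.prod_ite_eq']

lemma phiF_prod_diag_eq (hw : 0 < w) (i0 : Fin d) :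
    ∏ k, ∫ t, phiF w i0 i0 i0 k t
      = 4 * w * (Real.sqrt w / Real.sqrt π) := by
  have hfun : (fun k => ∫ t, phiF w i0 i0 i0 k t)
      = fun k => if k = i0 then 4 * w * (Real.sqrt w / Real.sqrt π) else 1 := by
    funext k
    unfold phiF
    by_cases hk : k = i0
    · simp only [if_pos hk]
      rw [show (fun t : ℝ => t * t * max t 0 * gauss1 w t)
          = fun t : ℝ => t^2 * max t 0 * gauss1 w t from funext fun t => by ring]
      exact gauss1_intmax2 hw
    · simp only [if_neg hk, one_mul]
      exact gauss1_int hw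
  rw [hfun]
  simp [Finset.prod_ite_eq']

lemma core_integral (hw : 0 < w) (i0 : Fin d) (M : Matrix (Fin d) (Fin d) ℝ) :
    ∫ x : Fin d → ℝ, (∑ i, ∑ j, M i j * x i * x j) * ((∏ k, gauss1 w (x k)) * max (x i0) 0)
      = 2 * w * (Real.sqrt w / Real.sqrt π) * (M.trace + M i0 i0) := by
  have hpt : ∀ x : Fin d → ℝ,
      (∑ i, ∑ j, M i j * x i * x j) * ((∏ k, gauss1 w (x k)) * max (x i0) 0)
        = ∑ i, ∑ j, M i j * ∏ k, phiF w i0 i j k (x k) := by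
    intro x
    rw [Finset.sum_mul]
    refine Finset.sum_congr rfl fun i _ => ?_
    rw [Finset.sum_mul]
    refine Finset.sum_congr rfl fun j _ => ?_
    unfold phiF
    rw [Finset.prod_mul_distrib, Finset.prod_mul_distrib, Finset.prod_mul_distrib]
    simp only [Finset.prod_ite_eq', Finset.mem_univ, if_true]
    ring
  simp_rw [hpt]
  have hterm : ∀ i j : Fin d,
      Integrable (fun x : Fin d → ℝ => M i j * ∏ k, phiF w i0 i j k (x k)) :=
    fun i j => (Integrable.fintype_prod (fun k => phiF_integrable hw i0 i j k)).const_mul _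
  rw [integral_finset_sum _ (fun i _ => integrable_finset_sum _ (fun j _ => hterm i j))]
  have hswap : ∀ i : Fin d, ∫ x : Fin d → ℝ, ∑ j, M i j * ∏ k, phiF w i0 i j k (x k)
      = ∑ j, M i j * ∏ k, ∫ t, phiF w i0 i j k t := by
    intro i
    rw [integral_finset_sum _ (fun j _ => hterm i j)]
    refine Finset.sum_congr rfl fun j _ => ?_
    rw [MeasureTheory.integral_const_mul, MeasureTheory.integral_fintype_prod_volume_eq_prod]
  simp_rw [hswap]
  have hdiag : ∀ i : Fin d, ∑ j, M i j * ∏ k, ∫ t, phiF w i0 i j k t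
      = M i i * ∏ k, ∫ t, phiF w i0 i i k t := by
    intro i
    apply Finset.sum_eq_single_of_mem i (Finset.mem_univ i)
    intro j _ hji
    rw [phiF_prod_offdiag hw (fun h => hji (h.symm)), mul_zero]
  simp_rw [hdiag]
  have hPi : ∀ i : Fin d, M i i * ∏ k, ∫ t, phiF w i0 i i k t
      = 2 * w * (Real.sqrt w / Real.sqrt π) * M i i
        + (if i = i0 then 2 * w * (Real.sqrt w / Real.sqrt π) * M i i else 0) := by
    intro i
    by_cases h : i = i0
    · subst h
      rw [phiF_prod_diag_eq hw, if_pos rfl]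
      ring
    · rw [phiF_prod_diag_ne hw h, if_neg h]
      ring
  simp_rw [hPi]
  rw [Finset.sum_add_distrib, ← Finset.mul_sum, Finset.sum_ite_eq' Finset.univ i0]
  simp only [Finset.mem_univ, if_true]
  have : M.trace = ∑ i, M i i := rfl
  rw [this]
  ring
end core


lemma heatKE_prod (d : ℕ) (w : ℝ) (hw : 0 < w) (y : EuclideanSpace ℝ (Fin d)) :
    heatKE d w y = ∏ k, gauss1 w (y k) := by
  unfold heatKE gauss1
  rw [Finset.prod_mul_distrib, Finset.prod_const]
  have hcard : (Finset.univ : Finset (Fin d)).card = d := by simp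
  rw [hcard]
  congr 1
  · rw [← Real.rpow_natCast ((4*π*w) ^ (-(1:ℝ)/2)) d, ← Real.rpow_mul (by positivity)]
    congr 1
    ring
  · rw [← Real.exp_sum]
    congr 1
    have hnorm : ‖y‖^2 = ∑ k, (y k)^2 := by
      rw [EuclideanSpace.norm_eq, Real.sq_sqrt (by positivity)]
      simp [Real.norm_eq_abs, sq_abs]
    rw [hnorm, ← Finset.sum_div, ← Finset.sum_neg_distrib]

/-- `∫ (Az)·∇G_w(z)·(ν·z)₊ dz = −(√w/√π)·(tr A + ν·Aν)` for a symmetric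
matrix `A` and a unit vector `ν`. -/
theorem stmt_14 (d : ℕ) (hd : 1 ≤ d) (w : ℝ) (hw : 0 < w)
    (A : Matrix (Fin d) (Fin d) ℝ) (hA : A.IsSymm)
    (ν : EuclideanSpace ℝ (Fin d)) (hν : ‖ν‖ = 1) :
    ∫ z : EuclideanSpace ℝ (Fin d),
        ⟪(show EuclideanSpace ℝ (Fin d) from WithLp.toLp 2 (A.mulVec fun i => z i)),
          gradient (heatKE d w) z⟫ * max ⟪ν, z⟫ 0
      = -(Real.sqrt w / Real.sqrt Real.pi) *
          (A.trace + ⟪ν, (show EuclideanSpace ℝ (Fin d) from WithLp.toLp 2 (A.mulVec fun i => ν i))⟫) := by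
  classical
  set i0 : Fin d := ⟨0, hd⟩ with hi0def
  -- an orthonormal basis whose `i0`-th vector is `ν`
  have hres : Orthonormal ℝ (Set.restrict {i0} (fun _ : Fin d => ν)) := by
    constructor
    · intro i
      exact hν
    · intro i j hij
      exfalso
      apply hij
      have h1 : (i : Fin d) = i0 := i.2
      have h2 : (j : Fin d) = i0 := j.2
      exact Subtype.ext (h1.trans h2.symm)
  obtain ⟨b, hb⟩ := hres.exists_orthonormalBasis_extension_of_card_eq (by simp)
  have hbi0 : b i0 = ν := hb i0 (Set.mem_singleton i0)
  set Amap : EuclideanSpace ℝ (Fin d) →ₗ[ℝ] EuclideanSpace ℝ (Fin d) :=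
    Matrix.toEuclideanLin A with hAmap
  have hshow : ∀ z : EuclideanSpace ℝ (Fin d),
      (show EuclideanSpace ℝ (Fin d) from WithLp.toLp 2 (A.mulVec fun i => z i)) = Amap z := fun z => rfl
  set M : Matrix (Fin d) (Fin d) ℝ := Matrix.of fun i j => ⟪Amap (b i), b j⟫ with hM
  set s : ℝ := Real.sqrt w / Real.sqrt π with hs
  -- Step 1: rewrite the integrand using the gradient formula
  have step1 : ∀ z : EuclideanSpace ℝ (Fin d),
      ⟪(show EuclideanSpace ℝ (Fin d) from WithLp.toLp 2 (A.mulVec fun i => z i)),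
          gradient (heatKE d w) z⟫ * max ⟪ν, z⟫ 0
        = (-(2*w)⁻¹) * (⟪Amap z, z⟫ * (heatKE d w z * max ⟪ν, z⟫ 0)) := by
    intro z
    rw [hshow, gradient_heatKE d w hw z, real_inner_smul_right]
    ring
  simp_rw [step1]
  rw [MeasureTheory.integral_const_mul]
  -- Step 2: rotate by the isometry `T = b.repr.symm`
  have hMP := (b.measurePreserving_repr_symm)
  have hemb := b.repr.symm.toHomeomorph.measurableEmbedding
  have step2 : ∫ z : EuclideanSpace ℝ (Fin d), ⟪Amap z, z⟫ * (heatKE d w z * max ⟪ν, z⟫ 0)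
      = ∫ y : EuclideanSpace ℝ (Fin d),
          (∑ i, ∑ j, M i j * y i * y j) * (heatKE d w y * max (y i0) 0) := by
    rw [← hMP.integral_comp hemb]
    refine integral_congr_ae (ae_of_all _ fun y => ?_)
    dsimp only
    have hq : ⟪Amap (b.repr.symm y), b.repr.symm y⟫ = ∑ i, ∑ j, M i j * y i * y j := by
      rw [← b.sum_repr_symm y, map_sum, sum_inner]
      refine Finset.sum_congr rfl fun i _ => ?_
      rw [LinearMap.map_smul, real_inner_smul_left, inner_sum, Finset.mul_sum]
      refine Finset.sum_congr rfl fun j _ => ?_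
      rw [real_inner_smul_right]
      simp only [hM, Matrix.of_apply]
      ring
    have hh : heatKE d w (b.repr.symm y) = heatKE d w y := by
      unfold heatKE
      rw [b.repr.symm.norm_map]
    have hn : ⟪ν, b.repr.symm y⟫ = y i0 := by
      have h1 : ν = b.repr.symm (b.repr ν) := (b.repr.symm_apply_apply ν).symm
      rw [h1, b.repr.symm.inner_map_map, ← hbi0, b.repr_self i0]
      simp [EuclideanSpace.inner_single_left]
    rw [hq, hh, hn]
  rw [step2]
  -- Step 3: move to the product space and use the core computation
  have step3 : ∫ y : EuclideanSpace ℝ (Fin d),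
      (∑ i, ∑ j, M i j * y i * y j) * (heatKE d w y * max (y i0) 0)
        = ∫ x : Fin d → ℝ,
            (∑ i, ∑ j, M i j * x i * x j) * ((∏ k, gauss1 w (x k)) * max (x i0) 0) := by
    have hMP2 : MeasurePreserving ((MeasurableEquiv.toLp 2 (Fin d → ℝ)))
        volume volume := (EuclideanSpace.volume_preserving_symm_measurableEquiv_toLp (Fin d)).symm
    rw [← hMP2.integral_comp' (g := fun y : EuclideanSpace ℝ (Fin d) =>
        (∑ i, ∑ j, M i j * y i * y j) * (heatKE d w y * max (y i0) 0))]
    refine integral_congr_ae (ae_of_all _ fun x => ?_)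
    dsimp only
    have hcoord : ∀ k : Fin d, ((MeasurableEquiv.toLp 2 (Fin d → ℝ)) x) k = x k :=
      fun k => rfl
    rw [heatKE_prod d w hw]
    simp_rw [hcoord]
  rw [step3, core_integral hw i0 M]
  -- Step 4: identify trace and the quadratic form
  have htr : M.trace = A.trace := by
    have h2 : M.trace = ∑ i, ⟪b i, Amap (b i)⟫ := by
      unfold Matrix.trace Matrix.diag
      refine Finset.sum_congr rfl fun i _ => ?_
      simp only [hM, Matrix.of_apply]
      rw [real_inner_comm]
    have h3 : LinearMap.trace ℝ _ Amap = ∑ i, ⟪b i, Amap (b i)⟫ := by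
      rw [LinearMap.trace_eq_matrix_trace ℝ b.toBasis]
      unfold Matrix.trace Matrix.diag
      refine Finset.sum_congr rfl fun i _ => ?_
      rw [LinearMap.toMatrix_apply, OrthonormalBasis.coe_toBasis,
        OrthonormalBasis.coe_toBasis_repr_apply, OrthonormalBasis.repr_apply_apply]
    have h4 : LinearMap.trace ℝ _ Amap = A.trace := by
      rw [show Amap = Matrix.toLin (PiLp.basisFun 2 ℝ (Fin d)) (PiLp.basisFun 2 ℝ (Fin d)) A from
        by rw [hAmap, Matrix.toEuclideanLin_eq_toLin]]
      rw [LinearMap.trace_eq_matrix_trace ℝ (PiLp.basisFun 2 ℝ (Fin d)), LinearMap.toMatrix_toLin]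
    rw [h2, ← h3, h4]
  have hM00 : M i0 i0 = ⟪ν, (show EuclideanSpace ℝ (Fin d) from WithLp.toLp 2 (A.mulVec fun i => ν i))⟫ := by
    rw [hshow ν]
    simp only [hM, Matrix.of_apply, hbi0]
    rw [real_inner_comm]
  rw [htr, hM00]
  have h2w : (2*w : ℝ) ≠ 0 := by positivity
  have key : ∀ X : ℝ, -(2*w)⁻¹ * (2 * w * (Real.sqrt w / Real.sqrt π) * X)
      = -(Real.sqrt w / Real.sqrt π) * X := by
    intro X
    rw [show -(2*w)⁻¹ * (2 * w * (Real.sqrt w / Real.sqrt π) * X)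
        = -(((2*w)⁻¹ * (2*w)) * ((Real.sqrt w / Real.sqrt π) * X)) from by ring,
      inv_mul_cancel₀ h2w, one_mul, neg_mul]
  exact key _
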